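/- Let p(n,r) denote the number of projections in D_r(M_n). Then p(0,0) = 1, p(n,r) = 0 if r < 0 or r > n, and for all n ≥ 1 and 0 ≤ r ≤ n, p(n,r) = p(n−1,r−1) + p(n−1,r) + p(n−1,r+1), where terms with out-of-range indices are 0. -/

import Mathlib

/-!
Partial Brauer diagrams on `n` points are formalized as set partitions
(equivalence relations, i.e. `Setoid`s) of the vertex set
`{1,…,n} ∪ {1',…,n'}`, encoded as `Fin n ⊕ Fin n`
(`Sum.inl i` is the upper vertex `i`, `Sum.inr i` is the lower vertex `i'`),
all of whose blocks have size at most 2.  The product of two diagrams is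
defined via connectivity (paths) in the product graph, and the involution `*`
by interchanging the two rows of vertices.
-/

noncomputable section

open scoped Classical

/-- Vertices of a diagram on `n` points. -/
abbrev PBV (n : ℕ) := Fin n ⊕ Fin n

/-- A "diagram candidate": an arbitrary set partition of the vertices. -/
abbrev Dgm (n : ℕ) := Setoid (PBV n)

/-- The equivalence relation ("joined by a path") generated by a relation. -/
inductive RGen {V : Type*} (r : V → V → Prop) : V → V → Prop
  | rel {x y : V} : r x y → RGen r x y
  | refl (x : V) : RGen r x x
  | symm {x y : V} : RGen r x y → RGen r y x
  | trans {x y z : V} : RGen r x y → RGen r y z → RGen r x z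

namespace Dgm

variable {n : ℕ}

/-- Vertices of the product graph: top, middle and bottom rows. -/
abbrev V3 (n : ℕ) := Fin n ⊕ (Fin n ⊕ Fin n)

/-- The first factor occupies the top and middle rows of the product graph. -/
def topMid : PBV n → V3 n
  | Sum.inl i => Sum.inl i
  | Sum.inr i => Sum.inr (Sum.inl i)

/-- The second factor occupies the middle and bottom rows of the product graph. -/
def midBot : PBV n → V3 n
  | Sum.inl i => Sum.inr (Sum.inl i)
  | Sum.inr i => Sum.inr (Sum.inr i)

/-- The product diagram occupies the top and bottom rows of the product graph. -/
def topBot : PBV n → V3 n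
  | Sum.inl i => Sum.inl i
  | Sum.inr i => Sum.inr (Sum.inr i)

/-- The edges of the product graph `Γ(α, β)`. -/
def prodEdges (α β : Dgm n) (x y : V3 n) : Prop :=
  (∃ a b : PBV n, α.r a b ∧ x = topMid a ∧ y = topMid b) ∨
  (∃ a b : PBV n, β.r a b ∧ x = midBot a ∧ y = midBot b)

/-- The product of two diagrams: two vertices lie in the same block of `α β`
iff they are joined by a path in the product graph `Γ(α, β)`. -/
def pmul (α β : Dgm n) : Dgm n where
  r x y := RGen (prodEdges α β) (topBot x) (topBot y)
  iseqv := ⟨fun _ => RGen.refl _, fun h => h.symm, fun h₁ h₂ => h₁.trans h₂⟩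

/-- Interchanging the upper and the lower vertices. -/
def swapUD : PBV n → PBV n
  | Sum.inl i => Sum.inr i
  | Sum.inr i => Sum.inl i

/-- The involution `α ↦ α*` (reflection in a horizontal axis). -/
def pstar (α : Dgm n) : Dgm n := Setoid.comap swapUD α

/-- All blocks of `α` have size at most 2. -/
def IsPB (α : Dgm n) : Prop :=
  ∀ x y z : PBV n, α.r x y → α.r x z → x = y ∨ x = z ∨ y = z

/-- The partial Brauer monoid `PB_n` (as a set of diagrams). -/
def PBset (n : ℕ) : Set (Dgm n) := {α | IsPB α}

/-- The position of a vertex in the linear order `1 < 2 < ⋯ < n < n' < ⋯ < 1'`. -/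
def vpos : PBV n → ℕ
  | Sum.inl i => (i : ℕ)
  | Sum.inr i => 2 * n - 1 - (i : ℕ)

/-- Planarity: no two blocks cross in the order `1 < ⋯ < n < n' < ⋯ < 1'`. -/
def IsPlanar (α : Dgm n) : Prop :=
  ∀ a b c d : PBV n, α.r a b → α.r c d →
    vpos a < vpos c → vpos c < vpos b → vpos b < vpos d → False

/-- The Motzkin monoid `M_n` (as a set of diagrams). -/
def Mset (n : ℕ) : Set (Dgm n) := {α | IsPB α ∧ IsPlanar α}

/-- The domain of `α`: upper points lying in a transversal block. -/
def domSet (α : Dgm n) : Set (Fin n) := {i | ∃ j, α.r (Sum.inl i) (Sum.inr j)}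

/-- The codomain of `α`: lower points lying in a transversal block. -/
def codomSet (α : Dgm n) : Set (Fin n) := {i | ∃ j, α.r (Sum.inr i) (Sum.inl j)}

/-- The rank of a diagram: the number of its transversal blocks (for a diagram
with blocks of size at most 2, each transversal block contains exactly one
upper point, so this is the size of the domain). -/
def prank (α : Dgm n) : ℕ := (domSet α).ncard

/-- `α` is an idempotent. -/
def IsIdpt (α : Dgm n) : Prop := pmul α α = α

/-- `α` is a projection. -/
def IsProj (α : Dgm n) : Prop := pmul α α = α ∧ pstar α = α

/-- The D-class `D_r(PB_n)`. -/
def DPB (n r : ℕ) : Set (Dgm n) := {α | α ∈ PBset n ∧ prank α = r}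

/-- The ideal `I_r(PB_n)`. -/
def IPB (n r : ℕ) : Set (Dgm n) := {α | α ∈ PBset n ∧ prank α ≤ r}

/-- The D-class `D_r(M_n)`. -/
def DM (n r : ℕ) : Set (Dgm n) := {α | α ∈ Mset n ∧ prank α = r}

/-- The ideal `I_r(M_n)`. -/
def IM (n r : ℕ) : Set (Dgm n) := {α | α ∈ Mset n ∧ prank α ≤ r}

end Dgm

/-- Membership in the closure of a subset under a binary operation. -/
inductive MClo {γ : Type*} (m : γ → γ → γ) (X : Set γ) : γ → Prop
  | base {x : γ} : x ∈ X → MClo m X x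
  | mul {x y : γ} : MClo m X x → MClo m X y → MClo m X (m x y)

/-- The subsemigroup `⟨X⟩` generated by the subset `X`. -/
def genSet {γ : Type*} (m : γ → γ → γ) (X : Set γ) : Set γ := {x | MClo m X x}

/-- The rank of `T`: the least size of a generating set. -/
noncomputable def rnk {γ : Type*} (m : γ → γ → γ) (T : Set γ) : ℕ :=
  sInf {k | ∃ X : Finset γ, X.card = k ∧ genSet m ↑X = T}

/-- The idempotent rank of `T`: the least size of a generating set consisting
of idempotents. -/
noncomputable def idrnk {γ : Type*} (m : γ → γ → γ) (T : Set γ) : ℕ :=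
  sInf {k | ∃ X : Finset γ, X.card = k ∧ (∀ x ∈ X, m x x = x) ∧ genSet m ↑X = T}

/-- `T` is idempotent-generated. -/
def IdptGen {γ : Type*} (m : γ → γ → γ) (T : Set γ) : Prop :=
  genSet m {x ∈ T | m x x = x} = T

open Dgm
/-- `a(m)`: `a(0) = a(1) = 1` and `a(m) = a(m-1) + (m-1)·a(m-2)`. -/
def aSeq : ℕ → ℕ
  | 0 => 1
  | 1 => 1
  | (m + 2) => aSeq (m + 1) + (m + 1) * aSeq m

/-- The double factorial `k!!`, with the convention `k!! = 0` for even `k ≥ 0`. -/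
def oddDF : ℕ → ℕ
  | 0 => 0
  | 1 => 1
  | (k + 2) => (k + 2) * oddDF k

namespace Dgm

variable {n : ℕ}

/-- `{x}` is a singleton upper block of `α`. -/
def UpperSingleton (α : Dgm n) (x : Fin n) : Prop :=
  ∀ y : PBV n, α.r (Sum.inl x) y → y = Sum.inl x

/-- `{x'}` is a singleton lower block of `α`. -/
def LowerSingleton (α : Dgm n) (x : Fin n) : Prop :=
  ∀ y : PBV n, α.r (Sum.inr x) y → y = Sum.inr x

/-- The upper point `x` is nested: some upper block `{u,v}` has `u < x < v`. -/
def UpperNested (α : Dgm n) (x : Fin n) : Prop :=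
  ∃ u v : Fin n, α.r (Sum.inl u) (Sum.inl v) ∧ u < x ∧ x < v

/-- The lower point `x'` is nested: some lower block `{u',v'}` has `u < x < v`. -/
def LowerNested (α : Dgm n) (x : Fin n) : Prop :=
  ∃ u v : Fin n, α.r (Sum.inr u) (Sum.inr v) ∧ u < x ∧ x < v

/-- `α` has no unnested singleton (upper or lower) block. -/
def NoUnnestedSingleton (α : Dgm n) : Prop :=
  (∀ x, UpperSingleton α x → UpperNested α x) ∧
  (∀ x, LowerSingleton α x → LowerNested α x)

/-- A chain of `d` nested upper hooks of `α` around the upper point `x`: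
`u_{d-1} < ⋯ < u_0 < x < v_0 < ⋯ < v_{d-1}` with each `{u_i, v_i}` a block.
The singleton upper block `{x}` has nesting depth at most `k` iff there is no
such chain of length `k + 1`. -/
def UpperHookChain (α : Dgm n) (x : Fin n) (d : ℕ) : Prop :=
  ∃ u v : Fin d → Fin n,
    (∀ i, α.r (Sum.inl (u i)) (Sum.inl (v i))) ∧
    (∀ i, u i < x ∧ x < v i) ∧ StrictAnti u ∧ StrictMono v

/-- A chain of `d` nested lower hooks of `α` around the lower point `x'`. -/
def LowerHookChain (α : Dgm n) (x : Fin n) (d : ℕ) : Prop :=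
  ∃ u v : Fin d → Fin n,
    (∀ i, α.r (Sum.inr (u i)) (Sum.inr (v i))) ∧
    (∀ i, u i < x ∧ x < v i) ∧ StrictAnti u ∧ StrictMono v

/-- `λ_A`: the planar diagram joining the `k`-th smallest element of `A`
(upper) to `k` (lower), all other blocks being singletons. -/
def lamd (A : Finset (Fin n)) : Dgm n :=
  Setoid.ker (fun x : PBV n =>
    match x with
    | Sum.inl a =>
        if ha : a ∈ A then
          (Sum.inr (((A.orderIsoOfFin rfl).symm ⟨a, ha⟩ : Fin A.card) : ℕ) : ℕ ⊕ ℕ)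
        else Sum.inl (a : ℕ)
    | Sum.inr j => Sum.inr (j : ℕ))

/-- `ρ_A = (λ_A)*`. -/
def rhod (A : Finset (Fin n)) : Dgm n := pstar (lamd A)

/-- The diagram whose 2-element blocks are exactly `{i, (π i)'}` for `i < r`. -/
def permDgm (n r : ℕ) (π : Equiv.Perm (Fin r)) : Dgm n :=
  Setoid.ker (fun x : PBV n =>
    match x with
    | Sum.inl a =>
        if h : (a : ℕ) < r then (Sum.inr ((π ⟨(a : ℕ), h⟩ : Fin r) : ℕ) : ℕ ⊕ ℕ)
        else Sum.inl (a : ℕ)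
    | Sum.inr j => Sum.inr (j : ℕ))

/-- The set `S_{[r]} ⊆ PB_n`. -/
def SBr (n r : ℕ) : Set (Dgm n) := {γ | ∃ π : Equiv.Perm (Fin r), γ = permDgm n r π}

/-- The domain of `α` as a `Finset`. -/
def domFinset (α : Dgm n) : Finset (Fin n) :=
  Finset.univ.filter fun i => i ∈ domSet α

/-- The codomain of `α` as a `Finset`. -/
def codomFinset (α : Dgm n) : Finset (Fin n) :=
  Finset.univ.filter fun i => i ∈ codomSet α

/-- `A ⊆ {1,…,n}` is cosparse: its complement contains no two consecutive
elements. -/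
def CosparseS (A : Set (Fin n)) : Prop :=
  ∀ i j : Fin n, i ∉ A → j ∉ A → (j : ℕ) ≠ (i : ℕ) + 1

/-- `id_A`: the diagram with blocks `{a, a'}` for `a ∈ A`, all other blocks
being singletons. -/
def idd (A : Set (Fin n)) : Dgm n :=
  Setoid.ker (fun x : PBV n =>
    match x with
    | Sum.inl a => if a ∈ A then (Sum.inr (a : ℕ) : ℕ ⊕ ℕ) else Sum.inl (a : ℕ)
    | Sum.inr j => Sum.inr (j : ℕ))

end Dgm

/-- `p(n,r)`: the number of projections in `D_r(M_n)`. -/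
noncomputable def pM (n r : ℕ) : ℕ := Set.ncard {α : Dgm n | α ∈ Dgm.DM n r ∧ Dgm.IsProj α}



namespace Dgm
variable {n m : ℕ}

instance : Finite (Dgm n) := by
  apply Finite.of_injective (fun s : Dgm n => s.r)
  intro a b h
  exact Setoid.ext fun x y => iff_of_eq (congrFun (congrFun h x) y)

def Sym (α : Dgm n) : Prop := ∀ x y, α.r x y → α.r (swapUD x) (swapUD y)
def Vert (α : Dgm n) : Prop := ∀ i j : Fin n, α.r (Sum.inl i) (Sum.inr j) → i = j

lemma swapUD_swapUD (x : PBV n) : swapUD (swapUD x) = x := by cases x <;> rfl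

lemma pstar_eq_iff {α : Dgm n} : pstar α = α ↔ Sym α := by
  constructor
  · intro h x y hxy
    have : (pstar α).r x y ↔ α.r x y := by rw [h]
    exact this.2 hxy
  · intro h
    refine Setoid.ext fun x y => ?_
    show α.r (swapUD x) (swapUD y) ↔ α.r x y
    constructor
    · intro hx; have := h _ _ hx; rwa [swapUD_swapUD, swapUD_swapUD] at this
    · exact h x y

lemma r_of_eq {α β : Dgm n} (h : α = β) {x y : PBV n} (hxy : α.r x y) : β.r x y := h ▸ hxy

lemma vert_of_proj {α : Dgm n} (hPB : IsPB α) (h : IsProj α) : Vert α := by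
  have hsym : Sym α := pstar_eq_iff.1 h.2
  intro i j hij
  have h2 : α.r (Sum.inl j) (Sum.inr i) := α.iseqv.symm (hsym _ _ hij)
  have hpath : (pmul α α).r (Sum.inl i) (Sum.inr i) :=
    RGen.trans (RGen.rel (Or.inl ⟨Sum.inl i, Sum.inr j, hij, rfl, rfl⟩))
      (RGen.rel (Or.inr ⟨Sum.inl j, Sum.inr i, h2, rfl, rfl⟩))
  have hii : α.r (Sum.inl i) (Sum.inr i) := r_of_eq h.1 hpath
  rcases hPB _ _ _ hij hii with h' | h' | h' <;> simp_all

/-- labeling of the product graph vertices -/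
def anchor (α : Dgm n) : V3 n → Quotient α ⊕ Quotient α
  | Sum.inl i => Sum.inl (Quotient.mk α (Sum.inl i))
  | Sum.inr (Sum.inr i) => Sum.inl (Quotient.mk α (Sum.inr i))
  | Sum.inr (Sum.inl i) =>
      if α.r (Sum.inl i) (Sum.inr i) then Sum.inl (Quotient.mk α (Sum.inl i))
      else Sum.inr (Quotient.mk α (Sum.inl i))

lemma quot_eq {α : Dgm n} {a b : PBV n} (h : α.r a b) : Quotient.mk α a = Quotient.mk α b :=
  Quotient.sound h

lemma quot_exact {α : Dgm n} {a b : PBV n} (h : Quotient.mk α a = Quotient.mk α b) : α.r a b :=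
  Quotient.exact h

lemma anchor_edge {α : Dgm n} (hPB : IsPB α) (hsym : Sym α) (hvert : Vert α)
    {x y : V3 n} (h : prodEdges α α x y) : anchor α x = anchor α y := by
  have key : ∀ i j : Fin n, α.r (Sum.inl i) (Sum.inl j) →
      (anchor α (Sum.inr (Sum.inl i)) = anchor α (Sum.inr (Sum.inl j))) := by
    intro i j hij
    by_cases hvi : α.r (Sum.inl i) (Sum.inr i)
    · have hji : j = i := by
        rcases hPB _ _ _ hij hvi with h' | h' | h' <;> simp_all [Sum.inl.injEq]
      subst hji; rfl
    · have hvj : ¬ α.r (Sum.inl j) (Sum.inr j) := by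
        intro hj
        have hij' := α.iseqv.symm hij
        have hijeq : i = j := by
          rcases hPB _ _ _ hij' hj with h' | h' | h' <;> simp_all [Sum.inl.injEq]
        exact hvi (hijeq ▸ hj)
      simp only [anchor, if_neg hvi, if_neg hvj]
      exact congrArg Sum.inr (quot_eq hij)
  have vertmid : ∀ i : Fin n, α.r (Sum.inl i) (Sum.inr i) →
      anchor α (Sum.inr (Sum.inl i)) = Sum.inl (Quotient.mk α (Sum.inl i)) := by
    intro i hi; simp only [anchor, if_pos hi]
  rcases h with ⟨a, b, hab, hx, hy⟩ | ⟨a, b, hab, hx, hy⟩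
  · subst hx; subst hy
    rcases a with i | i <;> rcases b with j | j
    · exact congrArg Sum.inl (quot_eq hab)
    · have hij : i = j := hvert _ _ hab
      subst hij
      show Sum.inl (Quotient.mk α (Sum.inl i)) = anchor α (Sum.inr (Sum.inl i))
      exact (vertmid i hab).symm
    · have hji : j = i := hvert _ _ (α.iseqv.symm hab)
      subst hji
      show anchor α (Sum.inr (Sum.inl j)) = Sum.inl (Quotient.mk α (Sum.inl j))
      exact vertmid j (α.iseqv.symm hab)
    · have h' : α.r (Sum.inl i) (Sum.inl j) := by
        have := hsym _ _ hab; simpa [swapUD] using this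
      exact key _ _ h'
  · subst hx; subst hy
    rcases a with i | i <;> rcases b with j | j
    · exact key _ _ hab
    · have hij : i = j := hvert _ _ hab
      subst hij
      show anchor α (Sum.inr (Sum.inl i)) = Sum.inl (Quotient.mk α (Sum.inr i))
      rw [vertmid i hab]
      exact congrArg Sum.inl (quot_eq hab)
    · have hji : j = i := hvert _ _ (α.iseqv.symm hab)
      subst hji
      show Sum.inl (Quotient.mk α (Sum.inr j)) = anchor α (Sum.inr (Sum.inl j))
      rw [vertmid j (α.iseqv.symm hab)]
      exact congrArg Sum.inl (quot_eq hab)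
    · exact congrArg Sum.inl (quot_eq hab)

lemma rgen_ker {V : Type*} {β : Type*} {r : V → V → Prop} {f : V → β}
    (hf : ∀ x y, r x y → f x = f y) {x y : V} (h : RGen r x y) : f x = f y := by
  induction h with
  | rel h => exact hf _ _ h
  | refl => rfl
  | symm _ ih => exact ih.symm
  | trans _ _ ih₁ ih₂ => exact ih₁.trans ih₂

lemma pmul_self_eq {α : Dgm n} (hPB : IsPB α) (hsym : Sym α) (hvert : Vert α) :
    pmul α α = α := by
  refine Setoid.ext fun x y => ?_
  constructor
  · intro h
    have := rgen_ker (f := anchor α) (fun _ _ hh => anchor_edge hPB hsym hvert hh) h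
    rcases x with i | i <;> rcases y with j | j <;>
      simp only [topBot, anchor, Sum.inl.injEq] at this <;> exact quot_exact this
  · intro h
    rcases x with i | i <;> rcases y with j | j
    · exact RGen.rel (Or.inl ⟨Sum.inl i, Sum.inl j, h, rfl, rfl⟩)
    · obtain rfl := hvert _ _ h
      exact RGen.trans (RGen.rel (Or.inl ⟨_, _, h, rfl, rfl⟩))
        (RGen.rel (Or.inr ⟨_, _, h, rfl, rfl⟩))
    · obtain rfl := hvert _ _ (α.iseqv.symm h)
      have h' := α.iseqv.symm h
      exact RGen.symm (RGen.trans (RGen.rel (Or.inl ⟨_, _, h', rfl, rfl⟩))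
        (RGen.rel (Or.inr ⟨_, _, h', rfl, rfl⟩)))
    · exact RGen.rel (Or.inr ⟨Sum.inr i, Sum.inr j, h, rfl, rfl⟩)

theorem isProj_iff {α : Dgm n} (hPB : IsPB α) : IsProj α ↔ Sym α ∧ Vert α := by
  constructor
  · intro h; exact ⟨pstar_eq_iff.1 h.2, vert_of_proj hPB h⟩
  · intro ⟨h1, h2⟩; exact ⟨pmul_self_eq hPB h1 h2, pstar_eq_iff.2 h1⟩

end Dgm

namespace Dgm
variable {m : ℕ}

def emb : PBV m → PBV (m + 1) := Sum.map Fin.succ Fin.succ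

@[simp] lemma emb_u (i : Fin m) : emb (Sum.inl i) = Sum.inl i.succ := rfl
@[simp] lemma emb_l (i : Fin m) : emb (Sum.inr i) = Sum.inr i.succ := rfl

lemma emb_inj : Function.Injective (emb (m := m)) := by
  rintro (a | a) (b | b) h <;> simp_all [emb, Fin.succ_inj]

@[simp] lemma emb_ne_u0 (x : PBV m) : emb x ≠ Sum.inl 0 := by
  rcases x with a | a <;> simp [Fin.succ_ne_zero]

@[simp] lemma emb_ne_l0 (x : PBV m) : emb x ≠ Sum.inr 0 := by
  rcases x with a | a <;> simp [Fin.succ_ne_zero]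

@[simp] lemma vpos_u0 : vpos (Sum.inl (0 : Fin (m + 1))) = 0 := rfl

@[simp] lemma vpos_l0 : vpos (Sum.inr (0 : Fin (m + 1))) = 2 * m + 1 := by
  show 2 * (m + 1) - 1 - 0 = 2 * m + 1; omega

@[simp] lemma vpos_usucc (c : Fin m) : vpos (Sum.inl (c.succ : Fin (m+1))) = (c : ℕ) + 1 := rfl

@[simp] lemma vpos_lsucc (c : Fin m) : vpos (Sum.inr (c.succ : Fin (m+1))) = 2 * m - (c : ℕ) := by
  show 2 * (m + 1) - 1 - ((c : ℕ) + 1) = 2 * m - (c : ℕ); omega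

@[simp] lemma vpos_emb (x : PBV m) : vpos (emb x) = vpos x + 1 := by
  rcases x with a | a
  · rfl
  · show 2 * (m + 1) - 1 - ((a : ℕ) + 1) = 2 * m - 1 - (a : ℕ) + 1
    have := a.isLt; omega

lemma vpos_lt_small (x : PBV m) : vpos x + 1 ≤ 2 * m := by
  rcases x with a | a
  · have := a.isLt; show (a : ℕ) + 1 ≤ 2 * m; omega
  · have := a.isLt; show 2 * m - 1 - (a : ℕ) + 1 ≤ 2 * m; omega

lemma swap_u (i : Fin m) : swapUD (Sum.inl i) = Sum.inr i := rfl
lemma swap_l (i : Fin m) : swapUD (Sum.inr i) = Sum.inl i := rfl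

lemma swap_emb (x : PBV m) : swapUD (emb x) = emb (swapUD x) := by cases x <;> rfl

/-! ### The three extension constructions -/

/-- extension by a singleton pair `{0}, {0'}` -/
def extS (β : Dgm m) : Dgm (m + 1) where
  r x y := x = y ∨ ∃ a b, x = emb a ∧ y = emb b ∧ β.r a b
  iseqv := by
    refine ⟨fun x => Or.inl rfl, ?_, ?_⟩
    · rintro x y (rfl | ⟨a, b, rfl, rfl, hab⟩)
      · exact Or.inl rfl
      · exact Or.inr ⟨b, a, rfl, rfl, β.iseqv.symm hab⟩
    · rintro x y z (rfl | ⟨a, b, rfl, rfl, hab⟩) h2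
      · exact h2
      · rcases h2 with rfl | ⟨a', b', ha', rfl, hab'⟩
        · exact Or.inr ⟨a, b, rfl, rfl, hab⟩
        · obtain rfl := emb_inj ha'
          exact Or.inr ⟨a, b', rfl, rfl, β.iseqv.trans hab hab'⟩

/-- extension by a vertical `{0, 0'}` -/
def extV (β : Dgm m) : Dgm (m + 1) where
  r x y := x = y ∨ ((x = Sum.inl 0 ∨ x = Sum.inr 0) ∧ (y = Sum.inl 0 ∨ y = Sum.inr 0)) ∨
    ∃ a b, x = emb a ∧ y = emb b ∧ β.r a b
  iseqv := by
    refine ⟨fun x => Or.inl rfl, ?_, ?_⟩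
    · rintro x y (rfl | ⟨hx, hy⟩ | ⟨a, b, rfl, rfl, hab⟩)
      · exact Or.inl rfl
      · exact Or.inr (Or.inl ⟨hy, hx⟩)
      · exact Or.inr (Or.inr ⟨b, a, rfl, rfl, β.iseqv.symm hab⟩)
    · rintro x y z (rfl | ⟨hx, hy⟩ | ⟨a, b, rfl, rfl, hab⟩) h2
      · exact h2
      · rcases h2 with rfl | ⟨hy', hz⟩ | ⟨a, b, rfl, rfl, hab⟩
        · exact Or.inr (Or.inl ⟨hx, hy⟩)
        · exact Or.inr (Or.inl ⟨hx, hz⟩)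
        · rcases hy with hy | hy
          · exact absurd hy (emb_ne_u0 a)
          · exact absurd hy (emb_ne_l0 a)
      · rcases h2 with rfl | ⟨hy', hz⟩ | ⟨a', b', ha', rfl, hab'⟩
        · exact Or.inr (Or.inr ⟨a, b, rfl, rfl, hab⟩)
        · rcases hy' with hy' | hy'
          · exact absurd hy' (emb_ne_u0 b)
          · exact absurd hy' (emb_ne_l0 b)
        · obtain rfl := emb_inj ha'
          exact Or.inr (Or.inr ⟨a, b', rfl, rfl, β.iseqv.trans hab hab'⟩)

/-- `a` avoids the points `c, c'` -/
def cok (c : Fin m) (a : PBV m) : Prop := a ≠ Sum.inl c ∧ a ≠ Sum.inr c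

lemma cok_swap (c : Fin m) (a : PBV m) : cok c (swapUD a) ↔ cok c a := by
  rcases a with a | a <;> simp [cok, swapUD, and_comm]

/-- extension by a hook `{0, (c+1)}, {0', (c+1)'}`, severing the vertical at `c` -/
def extP (c : Fin m) (β : Dgm m) : Dgm (m + 1) where
  r x y := x = y ∨
    ((x = Sum.inl 0 ∨ x = Sum.inl c.succ) ∧ (y = Sum.inl 0 ∨ y = Sum.inl c.succ)) ∨
    ((x = Sum.inr 0 ∨ x = Sum.inr c.succ) ∧ (y = Sum.inr 0 ∨ y = Sum.inr c.succ)) ∨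
    ∃ a b, x = emb a ∧ y = emb b ∧ β.r a b ∧ (a = b ∨ (cok c a ∧ cok c b))
  iseqv := by
    refine ⟨fun x => Or.inl rfl, ?_, ?_⟩
    · rintro x y (rfl | ⟨hx, hy⟩ | ⟨hx, hy⟩ | ⟨a, b, rfl, rfl, hab, g⟩)
      · exact Or.inl rfl
      · exact Or.inr (Or.inl ⟨hy, hx⟩)
      · exact Or.inr (Or.inr (Or.inl ⟨hy, hx⟩))
      · refine Or.inr (Or.inr (Or.inr ⟨b, a, rfl, rfl, β.iseqv.symm hab, ?_⟩))
        rcases g with rfl | ⟨g1, g2⟩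
        · exact Or.inl rfl
        · exact Or.inr ⟨g2, g1⟩
    · rintro x y z (rfl | ⟨hx, hy⟩ | ⟨hx, hy⟩ | ⟨a, b, rfl, rfl, hab, g⟩) h2
      · exact h2
      · rcases h2 with rfl | ⟨hy', hz⟩ | ⟨hy', hz⟩ | ⟨a, b, hy', rfl, hab, g⟩
        · exact Or.inr (Or.inl ⟨hx, hy⟩)
        · exact Or.inr (Or.inl ⟨hx, hz⟩)
        · rcases hy with hy | hy <;> rcases hy' with hy' | hy' <;> rw [hy] at hy' <;> simp at hy'
        · -- y ∈ upper special and y = emb a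
          rcases hy with hy | hy
          · rw [hy] at hy'; exact absurd hy'.symm (emb_ne_u0 a)
          · have ha : a = Sum.inl c := emb_inj (m := m) (by simp only [emb_u]; rw [← hy', hy])
            rcases g with rfl | ⟨g1, _⟩
            · exact Or.inr (Or.inl ⟨hx, by rw [← hy', hy]; exact Or.inr rfl⟩)
            · exact absurd ha g1.1
      · rcases h2 with rfl | ⟨hy', hz⟩ | ⟨hy', hz⟩ | ⟨a, b, hy', rfl, hab, g⟩
        · exact Or.inr (Or.inr (Or.inl ⟨hx, hy⟩))
        · rcases hy with hy | hy <;> rcases hy' with hy' | hy' <;> rw [hy] at hy' <;> simp at hy'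
        · exact Or.inr (Or.inr (Or.inl ⟨hx, hz⟩))
        · rcases hy with hy | hy
          · rw [hy] at hy'; exact absurd hy'.symm (emb_ne_l0 a)
          · have ha : a = Sum.inr c := emb_inj (m := m) (by simp only [emb_l]; rw [← hy', hy])
            rcases g with rfl | ⟨g1, _⟩
            · exact Or.inr (Or.inr (Or.inl ⟨hx, by rw [← hy', hy]; exact Or.inr rfl⟩))
            · exact absurd ha g1.2
      · rcases h2 with rfl | ⟨hy', hz⟩ | ⟨hy', hz⟩ | ⟨a', b', ha', rfl, hab', g'⟩
        · exact Or.inr (Or.inr (Or.inr ⟨a, b, rfl, rfl, hab, g⟩))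
        · rcases hy' with hy' | hy'
          · exact absurd hy' (emb_ne_u0 b)
          · have hb : b = Sum.inl c := emb_inj (m := m) (by simpa using hy')
            rcases g with rfl | ⟨_, g2⟩
            · exact Or.inr (Or.inl ⟨Or.inr hy', hz⟩)
            · exact absurd hb g2.1
        · rcases hy' with hy' | hy'
          · exact absurd hy' (emb_ne_l0 b)
          · have hb : b = Sum.inr c := emb_inj (m := m) (by simpa using hy')
            rcases g with rfl | ⟨_, g2⟩
            · exact Or.inr (Or.inr (Or.inl ⟨Or.inr hy', hz⟩))
            · exact absurd hb g2.2
        · obtain rfl := emb_inj ha'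
          refine Or.inr (Or.inr (Or.inr ⟨a, b', rfl, rfl, β.iseqv.trans hab hab', ?_⟩))
          rcases g with rfl | ⟨g1, g2⟩
          · exact g'
          · rcases g' with rfl | ⟨g1', g2'⟩
            · exact Or.inr ⟨g1, g2⟩
            · exact Or.inr ⟨g1, g2'⟩

lemma extS_r {β : Dgm m} {x y : PBV (m+1)} : (extS β).r x y ↔
    (x = y ∨ ∃ a b, x = emb a ∧ y = emb b ∧ β.r a b) := Iff.rfl

lemma extV_r {β : Dgm m} {x y : PBV (m+1)} : (extV β).r x y ↔
    (x = y ∨ ((x = Sum.inl 0 ∨ x = Sum.inr 0) ∧ (y = Sum.inl 0 ∨ y = Sum.inr 0)) ∨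
      ∃ a b, x = emb a ∧ y = emb b ∧ β.r a b) := Iff.rfl

lemma extP_r {β : Dgm m} {c : Fin m} {x y : PBV (m+1)} : (extP c β).r x y ↔
    (x = y ∨
    ((x = Sum.inl 0 ∨ x = Sum.inl c.succ) ∧ (y = Sum.inl 0 ∨ y = Sum.inl c.succ)) ∨
    ((x = Sum.inr 0 ∨ x = Sum.inr c.succ) ∧ (y = Sum.inr 0 ∨ y = Sum.inr c.succ)) ∨
    ∃ a b, x = emb a ∧ y = emb b ∧ β.r a b ∧ (a = b ∨ (cok c a ∧ cok c b))) := Iff.rfl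

end Dgm

namespace Dgm
variable {m : ℕ}

/-! ### IsPB -/

lemma extS_PB {β : Dgm m} (hPB : IsPB β) : IsPB (extS β) := by
  rintro x y z (rfl | ⟨a, b, rfl, rfl, hab⟩) h2
  · exact Or.inl rfl
  rcases h2 with rfl | ⟨a', b', ha', rfl, hab'⟩
  · exact Or.inr (Or.inl rfl)
  · obtain rfl := emb_inj ha'
    rcases hPB _ _ _ hab hab' with h | h | h
    · exact Or.inl (congrArg emb h)
    · exact Or.inr (Or.inl (congrArg emb h))
    · exact Or.inr (Or.inr (congrArg emb h))

lemma extV_PB {β : Dgm m} (hPB : IsPB β) : IsPB (extV β) := by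
  rintro x y z (rfl | ⟨hx, hy⟩ | ⟨a, b, rfl, rfl, hab⟩) h2
  · exact Or.inl rfl
  · rcases h2 with rfl | ⟨hx', hz⟩ | ⟨a, b, hx', rfl, hab⟩
    · exact Or.inr (Or.inl rfl)
    · rcases hx with rfl | rfl <;> rcases hy with rfl | rfl <;>
        rcases hz with rfl | rfl <;> simp
    · rcases hx with rfl | rfl
      · exact absurd hx'.symm (emb_ne_u0 a)
      · exact absurd hx'.symm (emb_ne_l0 a)
  · rcases h2 with rfl | ⟨hx', hz⟩ | ⟨a', b', ha', rfl, hab'⟩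
    · exact Or.inr (Or.inl rfl)
    · rcases hx' with hx' | hx'
      · exact absurd hx' (emb_ne_u0 a)
      · exact absurd hx' (emb_ne_l0 a)
    · obtain rfl := emb_inj ha'
      rcases hPB _ _ _ hab hab' with h | h | h
      · exact Or.inl (congrArg emb h)
      · exact Or.inr (Or.inl (congrArg emb h))
      · exact Or.inr (Or.inr (congrArg emb h))

lemma extP_PB {β : Dgm m} {c : Fin m} (hPB : IsPB β) : IsPB (extP c β) := by
  have embU : ∀ a : PBV m, emb a = Sum.inl c.succ → a = Sum.inl c := by
    intro a h; exact emb_inj (m := m) (by simp only [emb_u]; rw [h])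
  have embL : ∀ a : PBV m, emb a = Sum.inr c.succ → a = Sum.inr c := by
    intro a h; exact emb_inj (m := m) (by simp only [emb_l]; rw [h])
  rintro x y z (rfl | ⟨hx, hy⟩ | ⟨hx, hy⟩ | ⟨a, b, rfl, rfl, hab, g⟩) h2
  · exact Or.inl rfl
  · rcases h2 with rfl | ⟨hx', hz⟩ | ⟨hx', hz⟩ | ⟨a, b, hx', rfl, hab, g⟩
    · exact Or.inr (Or.inl rfl)
    · rcases hx with rfl | rfl <;> rcases hy with rfl | rfl <;>
        rcases hz with rfl | rfl <;> simp
    · rcases hx with rfl | rfl <;> rcases hx' with hx' | hx' <;> simp at hx'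
    · rcases hx with rfl | rfl
      · exact absurd hx'.symm (emb_ne_u0 a)
      · have ha : a = Sum.inl c := embU a hx'.symm
        rcases g with rfl | ⟨g1, _⟩
        · exact Or.inr (Or.inl hx')
        · exact absurd ha g1.1
  · rcases h2 with rfl | ⟨hx', hz⟩ | ⟨hx', hz⟩ | ⟨a, b, hx', rfl, hab, g⟩
    · exact Or.inr (Or.inl rfl)
    · rcases hx with rfl | rfl <;> rcases hx' with hx' | hx' <;> simp at hx'
    · rcases hx with rfl | rfl <;> rcases hy with rfl | rfl <;>
        rcases hz with rfl | rfl <;> simp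
    · rcases hx with rfl | rfl
      · exact absurd hx'.symm (emb_ne_l0 a)
      · have ha : a = Sum.inr c := embL a hx'.symm
        rcases g with rfl | ⟨g1, _⟩
        · exact Or.inr (Or.inl hx')
        · exact absurd ha g1.2
  · rcases h2 with rfl | ⟨hx', hz⟩ | ⟨hx', hz⟩ | ⟨a', b', ha', rfl, hab', g'⟩
    · exact Or.inr (Or.inl rfl)
    · rcases hx' with hx' | hx'
      · exact absurd hx' (emb_ne_u0 a)
      · have ha : a = Sum.inl c := embU a hx'
        rcases g with rfl | ⟨g1, _⟩
        · exact Or.inl rfl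
        · exact absurd ha g1.1
    · rcases hx' with hx' | hx'
      · exact absurd hx' (emb_ne_l0 a)
      · have ha : a = Sum.inr c := embL a hx'
        rcases g with rfl | ⟨g1, _⟩
        · exact Or.inl rfl
        · exact absurd ha g1.2
    · obtain rfl := emb_inj ha'
      rcases hPB _ _ _ hab hab' with h | h | h
      · exact Or.inl (congrArg emb h)
      · exact Or.inr (Or.inl (congrArg emb h))
      · exact Or.inr (Or.inr (congrArg emb h))

/-! ### Sym -/

lemma extS_sym {β : Dgm m} (hs : Sym β) : Sym (extS β) := by
  rintro x y (rfl | ⟨a, b, rfl, rfl, hab⟩)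
  · exact Or.inl rfl
  · exact Or.inr ⟨swapUD a, swapUD b, swap_emb a, swap_emb b, hs _ _ hab⟩

lemma extV_sym {β : Dgm m} (hs : Sym β) : Sym (extV β) := by
  rintro x y (rfl | ⟨hx, hy⟩ | ⟨a, b, rfl, rfl, hab⟩)
  · exact Or.inl rfl
  · refine Or.inr (Or.inl ⟨?_, ?_⟩)
    · rcases hx with rfl | rfl
      · exact Or.inr rfl
      · exact Or.inl rfl
    · rcases hy with rfl | rfl
      · exact Or.inr rfl
      · exact Or.inl rfl
  · exact Or.inr (Or.inr ⟨swapUD a, swapUD b, swap_emb a, swap_emb b, hs _ _ hab⟩)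

lemma extP_sym {β : Dgm m} {c : Fin m} (hs : Sym β) : Sym (extP c β) := by
  rintro x y (rfl | ⟨hx, hy⟩ | ⟨hx, hy⟩ | ⟨a, b, rfl, rfl, hab, g⟩)
  · exact Or.inl rfl
  · refine Or.inr (Or.inr (Or.inl ⟨?_, ?_⟩))
    · rcases hx with rfl | rfl
      · exact Or.inl rfl
      · exact Or.inr rfl
    · rcases hy with rfl | rfl
      · exact Or.inl rfl
      · exact Or.inr rfl
  · refine Or.inr (Or.inl ⟨?_, ?_⟩)
    · rcases hx with rfl | rfl
      · exact Or.inl rfl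
      · exact Or.inr rfl
    · rcases hy with rfl | rfl
      · exact Or.inl rfl
      · exact Or.inr rfl
  · refine Or.inr (Or.inr (Or.inr ⟨swapUD a, swapUD b, swap_emb a, swap_emb b, hs _ _ hab, ?_⟩))
    rcases g with rfl | ⟨g1, g2⟩
    · exact Or.inl rfl
    · exact Or.inr ⟨(cok_swap c a).2 g1, (cok_swap c b).2 g2⟩

/-! ### Vert -/

lemma emb_pair_vert {β : Dgm m} (hv : Vert β) {i j : Fin (m+1)} {a b : PBV m}
    (ha : Sum.inl i = emb a) (hb : Sum.inr j = emb b) (hab : β.r a b) : i = j := by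
  rcases a with a | a <;> rcases b with b | b <;> simp only [emb_u, emb_l] at ha hb
  · exact absurd hb (by simp)
  · obtain rfl : i = a.succ := by simpa using ha
    obtain rfl : j = b.succ := by simpa using hb
    rw [hv _ _ hab]
  · exact absurd ha (by simp)
  · exact absurd ha (by simp)

lemma extS_vert {β : Dgm m} (hv : Vert β) : Vert (extS β) := by
  rintro i j (h | ⟨a, b, ha, hb, hab⟩)
  · exact absurd h (by simp)
  · exact emb_pair_vert hv ha hb hab

lemma extV_vert {β : Dgm m} (hv : Vert β) : Vert (extV β) := by
  rintro i j (h | ⟨hx, hy⟩ | ⟨a, b, ha, hb, hab⟩)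
  · exact absurd h (by simp)
  · obtain rfl : i = 0 := by rcases hx with h | h <;> simpa using h
    obtain rfl : j = 0 := by rcases hy with h | h <;> simpa using h
    rfl
  · exact emb_pair_vert hv ha hb hab

lemma extP_vert {β : Dgm m} {c : Fin m} (hv : Vert β) : Vert (extP c β) := by
  rintro i j (h | ⟨hx, hy⟩ | ⟨hx, hy⟩ | ⟨a, b, ha, hb, hab, g⟩)
  · exact absurd h (by simp)
  · rcases hy with h | h <;> exact absurd h (by simp)
  · rcases hx with h | h <;> exact absurd h (by simp)
  · exact emb_pair_vert hv ha hb hab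

end Dgm

namespace Dgm
variable {m : ℕ}

set_option maxHeartbeats 1000000 in
lemma extV_planar {β : Dgm m} (hpl : IsPlanar β) : IsPlanar (extV β) := by
  rintro p q s t hpq hst h1 h2 h3
  rcases hpq with rfl | ⟨hp, hq⟩ | ⟨a, b, rfl, rfl, hab⟩
  · omega
  · rcases hst with rfl | ⟨hs, ht⟩ | ⟨a', b', rfl, rfl, hab'⟩
    · omega
    · rcases hp with rfl | rfl <;> rcases hq with rfl | rfl <;>
        rcases hs with rfl | rfl <;> rcases ht with rfl | rfl <;>
        simp only [vpos_u0, vpos_l0] at h1 h2 h3 <;> omega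
    · have hb := vpos_lt_small a'
      have hb' := vpos_lt_small b'
      rcases hp with rfl | rfl <;> rcases hq with rfl | rfl <;>
        simp only [vpos_u0, vpos_l0, vpos_emb] at h1 h2 h3 <;> omega
  · rcases hst with rfl | ⟨hs, ht⟩ | ⟨a', b', rfl, rfl, hab'⟩
    · omega
    · have hb := vpos_lt_small a
      have hb' := vpos_lt_small b
      rcases hs with rfl | rfl <;> rcases ht with rfl | rfl <;>
        simp only [vpos_u0, vpos_l0, vpos_emb] at h1 h2 h3 <;> omega
    · simp only [vpos_emb] at h1 h2 h3
      exact hpl _ _ _ _ hab hab' (by omega) (by omega) (by omega)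

set_option maxHeartbeats 1000000 in
lemma extS_planar {β : Dgm m} (hpl : IsPlanar β) : IsPlanar (extS β) := by
  rintro p q s t hpq hst h1 h2 h3
  rcases hpq with rfl | ⟨a, b, rfl, rfl, hab⟩
  · omega
  rcases hst with rfl | ⟨a', b', rfl, rfl, hab'⟩
  · omega
  simp only [vpos_emb] at h1 h2 h3
  exact hpl _ _ _ _ hab hab' (by omega) (by omega) (by omega)

set_option maxHeartbeats 1000000 in
lemma extP_planar {β : Dgm m} {c : Fin m} (hpl : IsPlanar β)
    (hstra : ∀ a b, β.r a b → vpos a < (c : ℕ) → (c : ℕ) < vpos b → False)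
    (hstra2 : ∀ a b, β.r a b → vpos a < 2 * m - 1 - (c : ℕ) → 2 * m - 1 - (c : ℕ) < vpos b → False) :
    IsPlanar (extP c β) := by
  have hcm := c.isLt
  rintro p q s t hpq hst h1 h2 h3
  rcases hpq with rfl | ⟨hp, hq⟩ | ⟨hp, hq⟩ | ⟨a, b, rfl, rfl, hab, -⟩
  · omega
  · rcases hst with rfl | ⟨hs, ht⟩ | ⟨hs, ht⟩ | ⟨a', b', rfl, rfl, hab', -⟩
    · omega
    · rcases hp with rfl | rfl <;> rcases hq with rfl | rfl <;>
        rcases hs with rfl | rfl <;> rcases ht with rfl | rfl <;>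
        simp only [vpos_u0, vpos_l0, vpos_usucc, vpos_lsucc] at h1 h2 h3 <;> omega
    · rcases hp with rfl | rfl <;> rcases hq with rfl | rfl <;>
        rcases hs with rfl | rfl <;> rcases ht with rfl | rfl <;>
        simp only [vpos_u0, vpos_l0, vpos_usucc, vpos_lsucc] at h1 h2 h3 <;> omega
    · have hb := vpos_lt_small a'
      have hb' := vpos_lt_small b'
      rcases hp with rfl | rfl <;> rcases hq with rfl | rfl <;>
        simp only [vpos_u0, vpos_l0, vpos_usucc, vpos_lsucc, vpos_emb] at h1 h2 h3 <;>
        first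
          | omega
          | exact hstra _ _ hab' (by omega) (by omega)
          | exact hstra2 _ _ hab' (by omega) (by omega)
  · rcases hst with rfl | ⟨hs, ht⟩ | ⟨hs, ht⟩ | ⟨a', b', rfl, rfl, hab', -⟩
    · omega
    · rcases hp with rfl | rfl <;> rcases hq with rfl | rfl <;>
        rcases hs with rfl | rfl <;> rcases ht with rfl | rfl <;>
        simp only [vpos_u0, vpos_l0, vpos_usucc, vpos_lsucc] at h1 h2 h3 <;> omega
    · rcases hp with rfl | rfl <;> rcases hq with rfl | rfl <;>
        rcases hs with rfl | rfl <;> rcases ht with rfl | rfl <;>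
        simp only [vpos_u0, vpos_l0, vpos_usucc, vpos_lsucc] at h1 h2 h3 <;> omega
    · have hb := vpos_lt_small a'
      have hb' := vpos_lt_small b'
      rcases hp with rfl | rfl <;> rcases hq with rfl | rfl <;>
        simp only [vpos_u0, vpos_l0, vpos_usucc, vpos_lsucc, vpos_emb] at h1 h2 h3 <;>
        first
          | omega
          | exact hstra _ _ hab' (by omega) (by omega)
          | exact hstra2 _ _ hab' (by omega) (by omega)
  · rcases hst with rfl | ⟨hs, ht⟩ | ⟨hs, ht⟩ | ⟨a', b', rfl, rfl, hab', -⟩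
    · omega
    · have hb := vpos_lt_small a
      have hb' := vpos_lt_small b
      rcases hs with rfl | rfl <;> rcases ht with rfl | rfl <;>
        simp only [vpos_u0, vpos_l0, vpos_usucc, vpos_lsucc, vpos_emb] at h1 h2 h3 <;>
        first
          | omega
          | exact hstra _ _ hab (by omega) (by omega)
          | exact hstra2 _ _ hab (by omega) (by omega)
    · have hb := vpos_lt_small a
      have hb' := vpos_lt_small b
      rcases hs with rfl | rfl <;> rcases ht with rfl | rfl <;>
        simp only [vpos_u0, vpos_l0, vpos_usucc, vpos_lsucc, vpos_emb] at h1 h2 h3 <;>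
        first
          | omega
          | exact hstra _ _ hab (by omega) (by omega)
          | exact hstra2 _ _ hab (by omega) (by omega)
    · simp only [vpos_emb] at h1 h2 h3
      exact hpl _ _ _ _ hab hab' (by omega) (by omega) (by omega)

/-! ### domains -/

lemma domSet_extS {β : Dgm m} : domSet (extS β) = Fin.succ '' domSet β := by
  ext i
  constructor
  · rintro ⟨j, (h | ⟨a, b, ha, hb, hab⟩)⟩
    · exact absurd h (by simp)
    · rcases a with a | a <;> rcases b with b | b <;> simp only [emb_u, emb_l] at ha hb
      · exact absurd hb (by simp)
      · obtain rfl : i = a.succ := by simpa using ha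
        exact ⟨a, ⟨b, hab⟩, rfl⟩
      · exact absurd ha (by simp)
      · exact absurd ha (by simp)
  · rintro ⟨a, ⟨b, hab⟩, rfl⟩
    exact ⟨b.succ, Or.inr ⟨Sum.inl a, Sum.inr b, rfl, rfl, hab⟩⟩

lemma domSet_extV {β : Dgm m} : domSet (extV β) = insert 0 (Fin.succ '' domSet β) := by
  ext i
  constructor
  · rintro ⟨j, (h | ⟨hx, hy⟩ | ⟨a, b, ha, hb, hab⟩)⟩
    · exact absurd h (by simp)
    · obtain rfl : i = 0 := by rcases hx with h | h <;> simpa using h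
      exact Or.inl rfl
    · rcases a with a | a <;> rcases b with b | b <;> simp only [emb_u, emb_l] at ha hb
      · exact absurd hb (by simp)
      · obtain rfl : i = a.succ := by simpa using ha
        exact Or.inr ⟨a, ⟨b, hab⟩, rfl⟩
      · exact absurd ha (by simp)
      · exact absurd ha (by simp)
  · rintro (rfl | ⟨a, ⟨b, hab⟩, rfl⟩)
    · exact ⟨0, Or.inr (Or.inl ⟨Or.inl rfl, Or.inr rfl⟩)⟩
    · exact ⟨b.succ, Or.inr (Or.inr ⟨Sum.inl a, Sum.inr b, rfl, rfl, hab⟩)⟩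

lemma domSet_extP {β : Dgm m} {c : Fin m} (hv : Vert β) :
    domSet (extP c β) = Fin.succ '' (domSet β \ {c}) := by
  ext i
  constructor
  · rintro ⟨j, (h | ⟨hx, hy⟩ | ⟨hx, hy⟩ | ⟨a, b, ha, hb, hab, g⟩)⟩
    · exact absurd h (by simp)
    · rcases hy with h | h <;> exact absurd h (by simp)
    · rcases hx with h | h <;> exact absurd h (by simp)
    · rcases a with a | a <;> rcases b with b | b <;> simp only [emb_u, emb_l] at ha hb
      · exact absurd hb (by simp)
      · obtain rfl : i = a.succ := by simpa using ha
        obtain rfl : a = b := hv _ _ hab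
        refine ⟨a, ⟨⟨a, hab⟩, ?_⟩, rfl⟩
        rcases g with h | ⟨g1, _⟩
        · exact absurd h (by simp)
        · simpa using g1.1
      · exact absurd ha (by simp)
      · exact absurd ha (by simp)
  · rintro ⟨a, ⟨⟨b, hab⟩, hac⟩, rfl⟩
    obtain rfl : a = b := hv _ _ hab
    have hac' : a ≠ c := by simpa using hac
    exact ⟨a.succ, Or.inr (Or.inr (Or.inr ⟨Sum.inl a, Sum.inr a, rfl, rfl, hab,
      Or.inr ⟨⟨by simpa using hac', by simp⟩, ⟨by simp, by simpa using hac'⟩⟩⟩))⟩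

lemma prank_extS {β : Dgm m} : prank (extS β) = prank β := by
  rw [prank, domSet_extS, Set.ncard_image_of_injective _ (Fin.succ_injective m)]; rfl

lemma prank_extV {β : Dgm m} : prank (extV β) = prank β + 1 := by
  rw [prank, domSet_extV, Set.ncard_insert_of_notMem (by simp [Fin.succ_ne_zero]) (Set.toFinite _),
    Set.ncard_image_of_injective _ (Fin.succ_injective m)]
  rfl

lemma prank_extP {β : Dgm m} {c : Fin m} (hv : Vert β) (hc : c ∈ domSet β) :
    prank (extP c β) = prank β - 1 := by
  rw [prank, domSet_extP hv, Set.ncard_image_of_injective _ (Fin.succ_injective m),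
    Set.ncard_diff_singleton_of_mem hc]
  rfl

end Dgm

namespace Dgm
variable {m n r : ℕ}

@[simp] lemma vpos_u {k : ℕ} (i : Fin k) : vpos (Sum.inl i) = (i : ℕ) := rfl
@[simp] lemma vpos_l {k : ℕ} (i : Fin k) : vpos (Sum.inr i) = 2 * k - 1 - (i : ℕ) := rfl

def TT (n r : ℕ) : Set (Dgm n) := {α | α ∈ DM n r ∧ IsProj α}

lemma pM_eq_ncard : pM n r = (TT n r).ncard := rfl

lemma mem_TT {α : Dgm n} : α ∈ TT n r ↔ IsPB α ∧ IsPlanar α ∧ Sym α ∧ Vert α ∧ prank α = r := by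
  constructor
  · rintro ⟨⟨⟨hPB, hpl⟩, hrk⟩, hproj⟩
    have h := (isProj_iff hPB).1 hproj
    exact ⟨hPB, hpl, h.1, h.2, hrk⟩
  · rintro ⟨hPB, hpl, hsym, hvert, hrk⟩
    exact ⟨⟨⟨hPB, hpl⟩, hrk⟩, (isProj_iff hPB).2 ⟨hsym, hvert⟩⟩

lemma pbv_cases (x : PBV (m + 1)) :
    x = Sum.inl 0 ∨ x = Sum.inr 0 ∨ ∃ x₀ : PBV m, x = emb x₀ := by
  rcases x with i | i <;> rcases Fin.eq_zero_or_eq_succ i with rfl | ⟨j, rfl⟩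
  · exact Or.inl rfl
  · exact Or.inr (Or.inr ⟨Sum.inl j, rfl⟩)
  · exact Or.inr (Or.inl rfl)
  · exact Or.inr (Or.inr ⟨Sum.inr j, rfl⟩)

/-- no block of `β` straddles the minimal vertical `c` -/
lemma straddle1 {β : Dgm m} (hpl : IsPlanar β) (hvert : Vert β) {c : Fin m}
    (hc : β.r (Sum.inl c) (Sum.inr c)) (hmin : ∀ i ∈ domSet β, c ≤ i) :
    ∀ a b, β.r a b → vpos a < (c : ℕ) → (c : ℕ) < vpos b → False := by
  intro a b hab h1 h2
  have hcm := c.isLt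
  rcases a with u | u
  · simp only [vpos_u] at h1
    rcases b with v | v
    · simp only [vpos_u] at h2
      have hv := v.isLt
      exact hpl _ _ _ _ hab hc (by simp only [vpos_u]; omega)
        (by simp only [vpos_u]; omega) (by simp only [vpos_u, vpos_l]; omega)
    · obtain rfl : u = v := hvert _ _ hab
      have : c ≤ u := hmin u ⟨_, hab⟩
      omega
  · have hu := u.isLt
    simp only [vpos_l] at h1; omega

lemma straddle2 {β : Dgm m} (hpl : IsPlanar β) (hvert : Vert β) {c : Fin m}
    (hc : β.r (Sum.inl c) (Sum.inr c)) (hmin : ∀ i ∈ domSet β, c ≤ i) :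
    ∀ a b, β.r a b → vpos a < 2 * m - 1 - (c : ℕ) → 2 * m - 1 - (c : ℕ) < vpos b → False := by
  intro a b hab h1 h2
  have hcm := c.isLt
  rcases b with v | v
  · have hv := v.isLt
    simp only [vpos_u] at h2; omega
  · have hv := v.isLt
    have hvc : (v : ℕ) < (c : ℕ) := by simp only [vpos_l] at h2; omega
    rcases a with u | u
    · obtain rfl : u = v := hvert _ _ hab
      have : c ≤ u := hmin u ⟨_, hab⟩
      omega
    · have hu := u.isLt
      have huc : (c : ℕ) < (u : ℕ) := by simp only [vpos_l] at h1; omega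
      exact hpl _ _ _ _ hc hab (by simp only [vpos_u, vpos_l]; omega)
        (by simp only [vpos_u, vpos_l]; omega) (by simp only [vpos_l]; omega)

/-! ### membership of extensions in TT -/

lemma extV_mem {β : Dgm m} (h : β ∈ TT m r) : extV β ∈ TT (m + 1) (r + 1) := by
  rw [mem_TT] at h ⊢
  obtain ⟨hPB, hpl, hsym, hvert, hrk⟩ := h
  exact ⟨extV_PB hPB, extV_planar hpl, extV_sym hsym, extV_vert hvert, by rw [prank_extV, hrk]⟩

lemma extS_mem {β : Dgm m} (h : β ∈ TT m r) : extS β ∈ TT (m + 1) r := by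
  rw [mem_TT] at h ⊢
  obtain ⟨hPB, hpl, hsym, hvert, hrk⟩ := h
  exact ⟨extS_PB hPB, extS_planar hpl, extS_sym hsym, extS_vert hvert, by rw [prank_extS, hrk]⟩

lemma extP_mem {β : Dgm m} {c : Fin m} (h : β ∈ TT m (r + 1)) (hc : c ∈ domSet β)
    (hmin : ∀ i ∈ domSet β, c ≤ i) : extP c β ∈ TT (m + 1) r := by
  rw [mem_TT] at h ⊢
  obtain ⟨hPB, hpl, hsym, hvert, hrk⟩ := h
  obtain ⟨j, hj⟩ := hc
  obtain rfl : c = j := hvert _ _ hj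
  refine ⟨extP_PB hPB, extP_planar hpl (straddle1 hpl hvert hj hmin) (straddle2 hpl hvert hj hmin),
    extP_sym hsym, extP_vert hvert, ?_⟩
  rw [prank_extP hvert ⟨c, hj⟩, hrk]
  omega

/-! ### characterization of relations at embedded points -/

lemma extS_r_emb {β : Dgm m} {x y : PBV m} : (extS β).r (emb x) (emb y) ↔ β.r x y := by
  constructor
  · rintro (h | ⟨a, b, ha, hb, hab⟩)
    · obtain rfl := emb_inj h; exact β.iseqv.refl x
    · obtain rfl := emb_inj ha; obtain rfl := emb_inj hb; exact hab
  · intro h; exact Or.inr ⟨x, y, rfl, rfl, h⟩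

lemma extV_r_emb {β : Dgm m} {x y : PBV m} : (extV β).r (emb x) (emb y) ↔ β.r x y := by
  constructor
  · rintro (h | ⟨hx, hy⟩ | ⟨a, b, ha, hb, hab⟩)
    · obtain rfl := emb_inj h; exact β.iseqv.refl x
    · rcases hx with hx | hx
      · exact absurd hx (emb_ne_u0 x)
      · exact absurd hx (emb_ne_l0 x)
    · obtain rfl := emb_inj ha; obtain rfl := emb_inj hb; exact hab
  · intro h; exact Or.inr (Or.inr ⟨x, y, rfl, rfl, h⟩)

lemma extP_r_emb {β : Dgm m} {c : Fin m} {x y : PBV m} :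
    (extP c β).r (emb x) (emb y) ↔ (x = y ∨ (β.r x y ∧ cok c x ∧ cok c y)) := by
  constructor
  · rintro (h | ⟨hx, hy⟩ | ⟨hx, hy⟩ | ⟨a, b, ha, hb, hab, g⟩)
    · exact Or.inl (emb_inj h)
    · rcases hx with hx | hx
      · exact absurd hx (emb_ne_u0 x)
      · obtain rfl : x = Sum.inl c := emb_inj (m := m) (by simp only [emb_u]; rw [hx])
        rcases hy with hy | hy
        · exact absurd hy (emb_ne_u0 y)
        · exact Or.inl (emb_inj (m := m) (by rw [hx, ← hy]))
    · rcases hx with hx | hx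
      · exact absurd hx (emb_ne_l0 x)
      · rcases hy with hy | hy
        · exact absurd hy (emb_ne_l0 y)
        · exact Or.inl (emb_inj (m := m) (by rw [hx, ← hy]))
    · obtain rfl := emb_inj ha; obtain rfl := emb_inj hb
      rcases g with rfl | ⟨g1, g2⟩
      · exact Or.inl rfl
      · exact Or.inr ⟨hab, g1, g2⟩
  · rintro (rfl | ⟨hab, g1, g2⟩)
    · exact Or.inl rfl
    · exact Or.inr (Or.inr (Or.inr ⟨x, y, rfl, rfl, hab, Or.inr ⟨g1, g2⟩⟩))

lemma extP_block0 {β : Dgm m} {c : Fin m} {y : PBV (m+1)} :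
    (extP c β).r (Sum.inl 0) y ↔ (y = Sum.inl 0 ∨ y = Sum.inl c.succ) := by
  constructor
  · rintro (rfl | ⟨hx, hy⟩ | ⟨hx, hy⟩ | ⟨a, b, ha, hb, hab, g⟩)
    · exact Or.inl rfl
    · exact hy
    · rcases hx with hx | hx <;> simp at hx
    · exact absurd ha.symm (emb_ne_u0 a)
  · rintro (rfl | rfl)
    · exact Or.inl rfl
    · exact Or.inr (Or.inl ⟨Or.inl rfl, Or.inr rfl⟩)

lemma extP_recover {β : Dgm m} {c : Fin m} (hPB : IsPB β)
    (hcv : β.r (Sum.inl c) (Sum.inr c)) {x y : PBV m} :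
    β.r x y ↔ ((extP c β).r (emb x) (emb y) ∨
      ((x = Sum.inl c ∨ x = Sum.inr c) ∧ (y = Sum.inl c ∨ y = Sum.inr c))) := by
  constructor
  · intro h
    by_cases hx : x = Sum.inl c ∨ x = Sum.inr c
    · refine Or.inr ⟨hx, ?_⟩
      rcases hx with rfl | rfl
      · rcases hPB _ _ _ h hcv with h' | h' | h'
        · exact Or.inl h'.symm
        · exact absurd h' (by simp)
        · exact Or.inr h'
      · rcases hPB _ _ _ h (β.iseqv.symm hcv) with h' | h' | h'
        · exact Or.inr h'.symm
        · exact absurd h' (by simp)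
        · exact Or.inl h'
    · by_cases hy : y = Sum.inl c ∨ y = Sum.inr c
      · exfalso
        apply hx
        rcases hy with rfl | rfl
        · rcases hPB _ _ _ (β.iseqv.symm h) hcv with h' | h' | h'
          · exact Or.inl h'.symm
          · exact absurd h' (by simp)
          · exact Or.inr h'
        · rcases hPB _ _ _ (β.iseqv.symm h) (β.iseqv.symm hcv) with h' | h' | h'
          · exact Or.inr h'.symm
          · exact absurd h' (by simp)
          · exact Or.inl h'
      · push_neg at hx hy
        exact Or.inl (extP_r_emb.2 (Or.inr ⟨h, ⟨hx.1, hx.2⟩, ⟨hy.1, hy.2⟩⟩))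
  · rintro (h | ⟨hx, hy⟩)
    · rcases extP_r_emb.1 h with rfl | ⟨h', _⟩
      · exact β.iseqv.refl x
      · exact h'
    · rcases hx with rfl | rfl <;> rcases hy with rfl | rfl
      · exact β.iseqv.refl _
      · exact hcv
      · exact β.iseqv.symm hcv
      · exact β.iseqv.refl _

lemma extS_injective : Function.Injective (extS : Dgm m → Dgm (m + 1)) := by
  intro β₁ β₂ h
  refine Setoid.ext fun x y => ?_
  rw [← extS_r_emb (β := β₁), ← extS_r_emb (β := β₂), h]

lemma extV_injective : Function.Injective (extV : Dgm m → Dgm (m + 1)) := by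
  intro β₁ β₂ h
  refine Setoid.ext fun x y => ?_
  rw [← extV_r_emb (β := β₁), ← extV_r_emb (β := β₂), h]

end Dgm

namespace Dgm
variable {m r : ℕ}

lemma emb_eq_usucc {z : PBV m} {c : Fin m} (h : emb z = Sum.inl c.succ) : z = Sum.inl c :=
  emb_inj (m := m) (by simp only [emb_u]; rw [h])

lemma emb_eq_lsucc {z : PBV m} {c : Fin m} (h : emb z = Sum.inr c.succ) : z = Sum.inr c :=
  emb_inj (m := m) (by simp only [emb_l]; rw [h])

lemma surjV {α : Dgm (m + 1)} (hα : α ∈ TT (m + 1) (r + 1))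
    (h0 : α.r (Sum.inl 0) (Sum.inr 0)) : ∃ β ∈ TT m r, extV β = α := by
  obtain ⟨hPB, hpl, hsym, hvert, hrk⟩ := mem_TT.1 hα
  set β : Dgm m := Setoid.comap emb α with hβ
  have hbu : ∀ y, α.r (Sum.inl 0) y → (y = Sum.inl 0 ∨ y = Sum.inr 0) := by
    intro y hy
    rcases hPB _ _ _ hy h0 with h' | h' | h'
    · exact Or.inl h'.symm
    · exact absurd h' (by simp)
    · exact Or.inr h'
  have hbl : ∀ y, α.r (Sum.inr 0) y → (y = Sum.inl 0 ∨ y = Sum.inr 0) := by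
    intro y hy
    rcases hPB _ _ _ hy (α.iseqv.symm h0) with h' | h' | h'
    · exact Or.inr h'.symm
    · exact absurd h' (by simp)
    · exact Or.inl h'
  have hext : extV β = α := by
    refine Setoid.ext fun x y => ?_
    constructor
    · rintro (rfl | ⟨hx, hy⟩ | ⟨a, b, rfl, rfl, hab⟩)
      · exact α.iseqv.refl x
      · rcases hx with rfl | rfl <;> rcases hy with rfl | rfl
        · exact α.iseqv.refl _
        · exact h0
        · exact α.iseqv.symm h0
        · exact α.iseqv.refl _
      · exact hab
    · intro h
      rcases pbv_cases x with rfl | rfl | ⟨x₀, rfl⟩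
      · exact Or.inr (Or.inl ⟨Or.inl rfl, hbu y h⟩)
      · exact Or.inr (Or.inl ⟨Or.inr rfl, hbl y h⟩)
      · rcases pbv_cases y with rfl | rfl | ⟨y₀, rfl⟩
        · rcases hbu _ (α.iseqv.symm h) with h' | h'
          · exact absurd h' (emb_ne_u0 x₀)
          · exact absurd h' (emb_ne_l0 x₀)
        · rcases hbl _ (α.iseqv.symm h) with h' | h'
          · exact absurd h' (emb_ne_u0 x₀)
          · exact absurd h' (emb_ne_l0 x₀)
        · exact Or.inr (Or.inr ⟨x₀, y₀, rfl, rfl, h⟩)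
  refine ⟨β, mem_TT.2 ⟨?_, ?_, ?_, ?_, ?_⟩, hext⟩
  · intro x y z hxy hxz
    rcases hPB _ _ _ hxy hxz with h | h | h
    · exact Or.inl (emb_inj h)
    · exact Or.inr (Or.inl (emb_inj h))
    · exact Or.inr (Or.inr (emb_inj h))
  · intro p q s t hpq hst h1 h2 h3
    exact hpl _ _ _ _ hpq hst (by simp only [vpos_emb]; omega)
      (by simp only [vpos_emb]; omega) (by simp only [vpos_emb]; omega)
  · intro x y hxy
    show α.r (emb (swapUD x)) (emb (swapUD y))
    rw [← swap_emb, ← swap_emb]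
    exact hsym _ _ hxy
  · intro i j hij
    exact Fin.succ_injective m (hvert _ _ hij)
  · have h1 : prank (extV β) = prank β + 1 := prank_extV
    rw [hext, hrk] at h1
    omega

lemma surjS {α : Dgm (m + 1)} (hα : α ∈ TT (m + 1) r)
    (h0 : ∀ y, α.r (Sum.inl 0) y → y = Sum.inl 0) : ∃ β ∈ TT m r, extS β = α := by
  obtain ⟨hPB, hpl, hsym, hvert, hrk⟩ := mem_TT.1 hα
  set β : Dgm m := Setoid.comap emb α with hβ
  have hl0 : ∀ y, α.r (Sum.inr 0) y → y = Sum.inr 0 := by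
    intro y hy
    have := hsym _ _ hy
    have h2 : swapUD y = Sum.inl 0 := h0 _ this
    have := congrArg swapUD h2
    rwa [swapUD_swapUD] at this
  have hext : extS β = α := by
    refine Setoid.ext fun x y => ?_
    constructor
    · rintro (rfl | ⟨a, b, rfl, rfl, hab⟩)
      · exact α.iseqv.refl x
      · exact hab
    · intro h
      rcases pbv_cases x with rfl | rfl | ⟨x₀, rfl⟩
      · exact Or.inl (h0 y h).symm
      · exact Or.inl (hl0 y h).symm
      · rcases pbv_cases y with rfl | rfl | ⟨y₀, rfl⟩
        · exact absurd (h0 _ (α.iseqv.symm h)) (emb_ne_u0 x₀)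
        · exact absurd (hl0 _ (α.iseqv.symm h)) (emb_ne_l0 x₀)
        · exact Or.inr ⟨x₀, y₀, rfl, rfl, h⟩
  refine ⟨β, mem_TT.2 ⟨?_, ?_, ?_, ?_, ?_⟩, hext⟩
  · intro x y z hxy hxz
    rcases hPB _ _ _ hxy hxz with h | h | h
    · exact Or.inl (emb_inj h)
    · exact Or.inr (Or.inl (emb_inj h))
    · exact Or.inr (Or.inr (emb_inj h))
  · intro p q s t hpq hst h1 h2 h3
    exact hpl _ _ _ _ hpq hst (by simp only [vpos_emb]; omega)
      (by simp only [vpos_emb]; omega) (by simp only [vpos_emb]; omega)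
  · intro x y hxy
    show α.r (emb (swapUD x)) (emb (swapUD y))
    rw [← swap_emb, ← swap_emb]
    exact hsym _ _ hxy
  · intro i j hij
    exact Fin.succ_injective m (hvert _ _ hij)
  · have h1 : prank (extS β) = prank β := prank_extS
    rw [hext, hrk] at h1
    omega

set_option maxHeartbeats 1000000 in
lemma surjP {α : Dgm (m + 1)} (hα : α ∈ TT (m + 1) r) {c : Fin m}
    (h0 : α.r (Sum.inl 0) (Sum.inl c.succ)) :
    ∃ β ∈ TT m (r + 1), (c ∈ domSet β ∧ ∀ i ∈ domSet β, c ≤ i) ∧ extP c β = α := by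
  obtain ⟨hPB, hpl, hsym, hvert, hrk⟩ := mem_TT.1 hα
  have hcm := c.isLt
  have hsne : (Sum.inl (c.succ : Fin (m+1)) : PBV (m+1)) ≠ Sum.inl 0 := by
    simp [Fin.succ_ne_zero]
  have hl0 : α.r (Sum.inr 0) (Sum.inr c.succ) := by
    have := hsym _ _ h0
    exact this
  have hbu : ∀ y, α.r (Sum.inl 0) y → (y = Sum.inl 0 ∨ y = Sum.inl c.succ) := by
    intro y hy
    rcases hPB _ _ _ hy h0 with h' | h' | h'
    · exact Or.inl h'.symm
    · exact absurd h' (by simp [Fin.succ_ne_zero, eq_comm])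
    · exact Or.inr h'
  have hbu' : ∀ y, α.r (Sum.inl c.succ) y → (y = Sum.inl 0 ∨ y = Sum.inl c.succ) := by
    intro y hy
    rcases hPB _ _ _ hy (α.iseqv.symm h0) with h' | h' | h'
    · exact Or.inr h'.symm
    · exact absurd h' hsne
    · exact Or.inl h'
  have hbl : ∀ y, α.r (Sum.inr 0) y → (y = Sum.inr 0 ∨ y = Sum.inr c.succ) := by
    intro y hy
    rcases hPB _ _ _ hy hl0 with h' | h' | h'
    · exact Or.inl h'.symm
    · exact absurd h' (by simp [Fin.succ_ne_zero, eq_comm])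
    · exact Or.inr h'
  have hbl' : ∀ y, α.r (Sum.inr c.succ) y → (y = Sum.inr 0 ∨ y = Sum.inr c.succ) := by
    intro y hy
    rcases hPB _ _ _ hy (α.iseqv.symm hl0) with h' | h' | h'
    · exact Or.inr h'.symm
    · exact absurd h' (by simp [Fin.succ_ne_zero])
    · exact Or.inl h'
  have keyU : ∀ z : PBV m, α.r (Sum.inl c.succ) (emb z) → z = Sum.inl c := by
    intro z hz
    rcases hbu' _ hz with h' | h'
    · exact absurd h' (emb_ne_u0 z)
    · exact emb_eq_usucc h'
  have keyL : ∀ z : PBV m, α.r (Sum.inr c.succ) (emb z) → z = Sum.inr c := by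
    intro z hz
    rcases hbl' _ hz with h' | h'
    · exact absurd h' (emb_ne_l0 z)
    · exact emb_eq_lsucc h'
  -- the restricted diagram
  set R : PBV m → PBV m → Prop := fun x y => α.r (emb x) (emb y) ∨
    ((x = Sum.inl c ∨ x = Sum.inr c) ∧ (y = Sum.inl c ∨ y = Sum.inr c)) with hR
  have Rsymm : ∀ {x y}, R x y → R y x := by
    rintro x y (h | ⟨hx, hy⟩)
    · exact Or.inl (α.iseqv.symm h)
    · exact Or.inr ⟨hy, hx⟩
  have Rtrans : ∀ {x y z}, R x y → R y z → R x z := by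
    rintro x y z (hxy | ⟨hx, hy⟩) (hyz | ⟨hy', hz⟩)
    · exact Or.inl (α.iseqv.trans hxy hyz)
    · rcases hy' with rfl | rfl
      · have := keyU x (α.iseqv.symm hxy)
        exact Or.inr ⟨Or.inl this, hz⟩
      · have := keyL x (α.iseqv.symm hxy)
        exact Or.inr ⟨Or.inr this, hz⟩
    · rcases hy with rfl | rfl
      · have := keyU z hyz
        exact Or.inr ⟨hx, Or.inl this⟩
      · have := keyL z hyz
        exact Or.inr ⟨hx, Or.inr this⟩
    · exact Or.inr ⟨hx, hz⟩
  set β : Dgm m := ⟨R, ⟨fun x => Or.inl (α.iseqv.refl (emb x)), Rsymm, Rtrans⟩⟩ with hβ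
  have hβr : ∀ x y, β.r x y ↔ R x y := fun _ _ => Iff.rfl
  have hcdom : c ∈ domSet β := ⟨c, Or.inr ⟨Or.inl rfl, Or.inr rfl⟩⟩
  have hmin : ∀ i ∈ domSet β, c ≤ i := by
    rintro i ⟨j, (h | ⟨hx, hy⟩)⟩
    · obtain rfl : i = j := Fin.succ_injective m (hvert _ _ h)
      by_contra hlt
      push_neg at hlt
      refine hpl (Sum.inl 0) (Sum.inl c.succ) (Sum.inl i.succ) (Sum.inr i.succ) h0 h ?_ ?_ ?_
      · simp only [vpos_u0, vpos_usucc]; omega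
      · simp only [vpos_usucc]; exact_mod_cast Nat.succ_lt_succ hlt
      · simp only [vpos_usucc, vpos_lsucc]; have := i.isLt; omega
    · have hic : i = c := by
        rcases hx with h' | h'
        · exact Sum.inl.inj h'
        · exact absurd h' (by simp)
      exact hic.symm.le
  have hext : extP c β = α := by
    refine Setoid.ext fun x y => ?_
    constructor
    · rintro (rfl | ⟨hx, hy⟩ | ⟨hx, hy⟩ | ⟨a, b, rfl, rfl, hab, g⟩)
      · exact α.iseqv.refl x
      · rcases hx with rfl | rfl <;> rcases hy with rfl | rfl
        · exact α.iseqv.refl _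
        · exact h0
        · exact α.iseqv.symm h0
        · exact α.iseqv.refl _
      · rcases hx with rfl | rfl <;> rcases hy with rfl | rfl
        · exact α.iseqv.refl _
        · exact hl0
        · exact α.iseqv.symm hl0
        · exact α.iseqv.refl _
      · rcases hab with h | ⟨ha, hb⟩
        · exact h
        · rcases g with rfl | ⟨g1, g2⟩
          · exact α.iseqv.refl _
          · rcases ha with rfl | rfl
            · exact absurd rfl g1.1
            · exact absurd rfl g1.2
    · intro h
      rcases pbv_cases x with rfl | rfl | ⟨x₀, rfl⟩
      · refine Or.inr (Or.inl ⟨Or.inl rfl, hbu y h⟩)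
      · refine Or.inr (Or.inr (Or.inl ⟨Or.inl rfl, hbl y h⟩))
      · rcases pbv_cases y with rfl | rfl | ⟨y₀, rfl⟩
        · rcases hbu _ (α.iseqv.symm h) with h' | h'
          · exact absurd h' (emb_ne_u0 x₀)
          · obtain rfl : x₀ = Sum.inl c := emb_eq_usucc h'
            exact Or.inr (Or.inl ⟨Or.inr h', Or.inl rfl⟩)
        · rcases hbl _ (α.iseqv.symm h) with h' | h'
          · exact absurd h' (emb_ne_l0 x₀)
          · obtain rfl : x₀ = Sum.inr c := emb_eq_lsucc h'
            exact Or.inr (Or.inr (Or.inl ⟨Or.inr h', Or.inl rfl⟩))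
        · by_cases hxc : x₀ = Sum.inl c ∨ x₀ = Sum.inr c
          · rcases hxc with rfl | rfl
            · have hy0 : y₀ = Sum.inl c := keyU y₀ h
              exact Or.inr (Or.inr (Or.inr ⟨_, _, rfl, rfl, Or.inl h, Or.inl hy0.symm⟩))
            · have hy0 : y₀ = Sum.inr c := keyL y₀ h
              exact Or.inr (Or.inr (Or.inr ⟨_, _, rfl, rfl, Or.inl h, Or.inl hy0.symm⟩))
          · by_cases hyc : y₀ = Sum.inl c ∨ y₀ = Sum.inr c
            · exfalso
              apply hxc
              rcases hyc with rfl | rfl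
              · exact Or.inl (keyU x₀ (α.iseqv.symm h))
              · exact Or.inr (keyL x₀ (α.iseqv.symm h))
            · push_neg at hxc hyc
              exact Or.inr (Or.inr (Or.inr ⟨x₀, y₀, rfl, rfl, Or.inl h,
                Or.inr ⟨⟨hxc.1, hxc.2⟩, ⟨hyc.1, hyc.2⟩⟩⟩))
  have hβPB : IsPB β := by
    rintro x y z (hxy | ⟨hx, hy⟩) (hxz | ⟨hx', hz⟩)
    · rcases hPB _ _ _ hxy hxz with h | h | h
      · exact Or.inl (emb_inj h)
      · exact Or.inr (Or.inl (emb_inj h))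
      · exact Or.inr (Or.inr (emb_inj h))
    · rcases hx' with rfl | rfl
      · exact Or.inl (keyU y hxy).symm
      · exact Or.inl (keyL y hxy).symm
    · rcases hx with rfl | rfl
      · exact Or.inr (Or.inl (keyU z hxz).symm)
      · exact Or.inr (Or.inl (keyL z hxz).symm)
    · rcases hx with rfl | rfl <;> rcases hy with rfl | rfl <;>
        rcases hz with rfl | rfl <;> simp
  have hβpl : IsPlanar β := by
    rintro p q s t (hpq | ⟨hp, hq⟩) hst h1 h2 h3
    · rcases hst with hst | ⟨hs, ht⟩
      · exact hpl _ _ _ _ hpq hst (by simp only [vpos_emb]; omega)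
          (by simp only [vpos_emb]; omega) (by simp only [vpos_emb]; omega)
      · have hbp := vpos_lt_small p
        have hbq := vpos_lt_small q
        rcases hs with rfl | rfl <;> rcases ht with rfl | rfl <;>
          simp only [vpos_u, vpos_l] at h1 h2 h3 <;>
          first
            | omega
            | exact hpl _ _ _ _ h0 hpq
                (by simp only [vpos_emb, vpos_u0]; omega)
                (by simp only [vpos_emb, vpos_usucc]; omega)
                (by simp only [vpos_emb, vpos_usucc]; omega)
            | exact hpl _ _ _ _ hpq (α.iseqv.symm hl0)
                (by simp only [vpos_emb, vpos_lsucc]; omega)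
                (by simp only [vpos_emb, vpos_lsucc]; omega)
                (by simp only [vpos_emb, vpos_l0]; omega)
    · rcases hst with hst | ⟨hs, ht⟩
      · have hbs := vpos_lt_small s
        have hbt := vpos_lt_small t
        rcases hp with rfl | rfl <;> rcases hq with rfl | rfl <;>
          simp only [vpos_u, vpos_l] at h1 h2 h3 <;>
          first
            | omega
            | exact hpl _ _ _ _ h0 hst
                (by simp only [vpos_emb, vpos_u0]; omega)
                (by simp only [vpos_emb, vpos_usucc]; omega)
                (by simp only [vpos_emb, vpos_usucc]; omega)
            | exact hpl _ _ _ _ hst (α.iseqv.symm hl0)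
                (by simp only [vpos_emb, vpos_lsucc]; omega)
                (by simp only [vpos_emb, vpos_lsucc]; omega)
                (by simp only [vpos_emb, vpos_l0]; omega)
      · rcases hp with rfl | rfl <;> rcases hq with rfl | rfl <;>
          rcases hs with rfl | rfl <;> rcases ht with rfl | rfl <;>
          simp only [vpos_u, vpos_l] at h1 h2 h3 <;> omega
  have hβsym : Sym β := by
    rintro x y (h | ⟨hx, hy⟩)
    · refine Or.inl ?_
      show α.r (emb (swapUD x)) (emb (swapUD y))
      rw [← swap_emb, ← swap_emb]
      exact hsym _ _ h
    · refine Or.inr ⟨?_, ?_⟩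
      · rcases hx with rfl | rfl
        · exact Or.inr rfl
        · exact Or.inl rfl
      · rcases hy with rfl | rfl
        · exact Or.inr rfl
        · exact Or.inl rfl
  have hβvert : Vert β := by
    rintro i j (h | ⟨hx, hy⟩)
    · exact Fin.succ_injective m (hvert _ _ h)
    · have hic : i = c := by
        rcases hx with h' | h'
        · exact Sum.inl.inj h'
        · exact absurd h' (by simp)
      have hjc : j = c := by
        rcases hy with h' | h'
        · exact absurd h' (by simp)
        · exact Sum.inr.inj h'
      rw [hic, hjc]
  have hrank : prank β = r + 1 := by
    have h1 : prank (extP c β) = prank β - 1 := prank_extP hβvert hcdom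
    rw [hext, hrk] at h1
    have h2 : 0 < prank β := (Set.ncard_pos (Set.toFinite _)).2 ⟨c, hcdom⟩
    omega
  exact ⟨β, mem_TT.2 ⟨hβPB, hβpl, hβsym, hβvert, hrank⟩, ⟨hcdom, hmin⟩, hext⟩

end Dgm

namespace Dgm
variable {m r : ℕ}

noncomputable def extPm (β : Dgm m) : Dgm (m + 1) :=
  if h : ((domSet β).toFinite.toFinset).Nonempty then
    extP ((domSet β).toFinite.toFinset.min' h) β
  else extS β

lemma extPm_spec {β : Dgm m} (h : (domSet β).Nonempty) :
    ∃ c : Fin m, extPm β = extP c β ∧ c ∈ domSet β ∧ ∀ i ∈ domSet β, c ≤ i := by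
  have hne : ((domSet β).toFinite.toFinset).Nonempty :=
    (Set.Finite.toFinset_nonempty _).2 h
  refine ⟨_, dif_pos hne, ?_, ?_⟩
  · have := Finset.min'_mem _ hne
    simpa [Set.Finite.mem_toFinset] using this
  · intro i hi
    exact Finset.min'_le _ _ (by simpa [Set.Finite.mem_toFinset] using hi)

lemma extPm_eq_of_min {β : Dgm m} {c : Fin m} (hc : c ∈ domSet β)
    (hmin : ∀ i ∈ domSet β, c ≤ i) : extPm β = extP c β := by
  obtain ⟨c', he, hc', hmin'⟩ := extPm_spec ⟨c, hc⟩
  have : c' = c := le_antisymm (hmin' c hc) (hmin c' hc')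
  rw [he, this]

lemma TT_cases {α : Dgm (m + 1)} (h : α ∈ TT (m + 1) r) :
    α.r (Sum.inl 0) (Sum.inr 0) ∨ (∀ y, α.r (Sum.inl 0) y → y = Sum.inl 0) ∨
      ∃ c : Fin m, α.r (Sum.inl 0) (Sum.inl c.succ) := by
  obtain ⟨hPB, hpl, hsym, hvert, -⟩ := mem_TT.1 h
  by_cases hs : ∀ y, α.r (Sum.inl 0) y → y = Sum.inl 0
  · exact Or.inr (Or.inl hs)
  · push_neg at hs
    obtain ⟨y, hy, hne⟩ := hs
    rcases y with j | j
    · rcases Fin.eq_zero_or_eq_succ j with rfl | ⟨c, rfl⟩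
      · exact absurd rfl hne
      · exact Or.inr (Or.inr ⟨c, hy⟩)
    · obtain rfl : (0 : Fin (m + 1)) = j := hvert _ _ hy
      exact Or.inl hy

lemma partV_empty :
    {α : Dgm (m + 1) | α ∈ TT (m + 1) 0 ∧ α.r (Sum.inl 0) (Sum.inr 0)} = ∅ := by
  ext α
  simp only [Set.mem_setOf_eq, Set.mem_empty_iff_false, iff_false, not_and]
  intro hm h0
  obtain ⟨-, -, -, -, hrk⟩ := mem_TT.1 hm
  have : 0 < prank α := (Set.ncard_pos (Set.toFinite _)).2 ⟨0, 0, h0⟩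
  omega

lemma partV_eq :
    {α : Dgm (m + 1) | α ∈ TT (m + 1) (r + 1) ∧ α.r (Sum.inl 0) (Sum.inr 0)} =
      extV '' TT m r := by
  ext α
  constructor
  · rintro ⟨hm, h0⟩
    obtain ⟨β, hβ, hext⟩ := surjV hm h0
    exact ⟨β, hβ, hext⟩
  · rintro ⟨β, hβ, rfl⟩
    exact ⟨extV_mem hβ, Or.inr (Or.inl ⟨Or.inl rfl, Or.inr rfl⟩)⟩

lemma partS_eq :
    {α : Dgm (m + 1) | α ∈ TT (m + 1) r ∧ ∀ y, α.r (Sum.inl 0) y → y = Sum.inl 0} =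
      extS '' TT m r := by
  ext α
  constructor
  · rintro ⟨hm, h0⟩
    obtain ⟨β, hβ, hext⟩ := surjS hm h0
    exact ⟨β, hβ, hext⟩
  · rintro ⟨β, hβ, rfl⟩
    refine ⟨extS_mem hβ, ?_⟩
    rintro y (h | ⟨a, b, ha, hb, hab⟩)
    · exact h.symm
    · exact absurd ha.symm (emb_ne_u0 a)

lemma partP_eq :
    {α : Dgm (m + 1) | α ∈ TT (m + 1) r ∧ ∃ c : Fin m, α.r (Sum.inl 0) (Sum.inl c.succ)} =
      extPm '' TT m (r + 1) := by
  ext α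
  constructor
  · rintro ⟨hm, c, h0⟩
    obtain ⟨β, hβ, ⟨hc, hmin⟩, hext⟩ := surjP hm h0
    exact ⟨β, hβ, by rw [extPm_eq_of_min hc hmin, hext]⟩
  · rintro ⟨β, hβ, rfl⟩
    have hrk : prank β = r + 1 := (mem_TT.1 hβ).2.2.2.2
    have hne : (domSet β).Nonempty := by
      rw [← Set.ncard_pos (Set.toFinite _)]
      have : (domSet β).ncard = r + 1 := hrk
      omega
    obtain ⟨c, he, hc, hmin⟩ := extPm_spec hne
    rw [he]
    exact ⟨extP_mem hβ hc hmin, c, Or.inr (Or.inl ⟨Or.inl rfl, Or.inr rfl⟩)⟩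

lemma extPm_injOn : Set.InjOn extPm (TT m (r + 1)) := by
  intro β₁ h₁ β₂ h₂ he
  have hrk₁ : prank β₁ = r + 1 := (mem_TT.1 h₁).2.2.2.2
  have hrk₂ : prank β₂ = r + 1 := (mem_TT.1 h₂).2.2.2.2
  have hne₁ : (domSet β₁).Nonempty := by
    rw [← Set.ncard_pos (Set.toFinite _)]
    have : (domSet β₁).ncard = r + 1 := hrk₁
    omega
  have hne₂ : (domSet β₂).Nonempty := by
    rw [← Set.ncard_pos (Set.toFinite _)]
    have : (domSet β₂).ncard = r + 1 := hrk₂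
    omega
  obtain ⟨c₁, e₁, hc₁, hm₁⟩ := extPm_spec hne₁
  obtain ⟨c₂, e₂, hc₂, hm₂⟩ := extPm_spec hne₂
  rw [e₁, e₂] at he
  have hcc : c₁ = c₂ := by
    have h01 : (extP c₁ β₁).r (Sum.inl 0) (Sum.inl c₁.succ) :=
      Or.inr (Or.inl ⟨Or.inl rfl, Or.inr rfl⟩)
    rw [he] at h01
    rcases extP_block0.1 h01 with h' | h'
    · exact absurd (Sum.inl.inj h') (Fin.succ_ne_zero c₁)
    · exact Fin.succ_injective _ (Sum.inl.inj h')
  subst hcc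
  have hPB₁ := (mem_TT.1 h₁).1
  have hPB₂ := (mem_TT.1 h₂).1
  have hv₁ := (mem_TT.1 h₁).2.2.2.1
  have hv₂ := (mem_TT.1 h₂).2.2.2.1
  have hcv₁ : β₁.r (Sum.inl c₁) (Sum.inr c₁) := by
    obtain ⟨j, hj⟩ := hc₁
    obtain rfl : c₁ = j := hv₁ _ _ hj
    exact hj
  have hcv₂ : β₂.r (Sum.inl c₁) (Sum.inr c₁) := by
    obtain ⟨j, hj⟩ := hc₂
    obtain rfl : c₁ = j := hv₂ _ _ hj
    exact hj
  refine Setoid.ext fun x y => ?_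
  rw [extP_recover hPB₁ hcv₁, extP_recover hPB₂ hcv₂, he]

end Dgm

open Dgm in
lemma pM_zero_zero : pM 0 0 = 1 := by
  have huniv : {α : Dgm 0 | α ∈ DM 0 0 ∧ IsProj α} = Set.univ := by
    ext α
    simp only [Set.mem_setOf_eq, Set.mem_univ, iff_true]
    have hPB : IsPB α := by rintro (x | x) <;> exact x.elim0
    have hdom : domSet α = ∅ := Set.eq_empty_of_isEmpty _
    refine ⟨⟨⟨hPB, ?_⟩, ?_⟩, ?_⟩
    · rintro (a | a) <;> exact a.elim0
    · rw [prank, hdom, Set.ncard_empty]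
    · refine (isProj_iff hPB).2 ⟨?_, ?_⟩
      · rintro (x | x) <;> exact x.elim0
      · intro i; exact i.elim0
  have hsub : Subsingleton (Dgm 0) :=
    ⟨fun a b => Setoid.ext fun x y => by rcases x with x | x <;> exact x.elim0⟩
  have hnon : Nonempty (Dgm 0) := ⟨Setoid.ker id⟩
  show Set.ncard {α : Dgm 0 | α ∈ DM 0 0 ∧ IsProj α} = 1
  rw [huniv, Set.ncard_univ]
  exact Nat.card_eq_one_iff_unique.2 ⟨hsub, hnon⟩

open Dgm in
lemma pM_high (n r : ℕ) (h : n < r) : pM n r = 0 := by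
  have : {α : Dgm n | α ∈ DM n r ∧ IsProj α} = ∅ := by
    ext α
    simp only [Set.mem_setOf_eq, Set.mem_empty_iff_false, iff_false, not_and]
    rintro ⟨-, hrk⟩ -
    have h1 : (domSet α).ncard ≤ (Set.univ : Set (Fin n)).ncard :=
      Set.ncard_le_ncard (Set.subset_univ _) (Set.toFinite _)
    rw [Set.ncard_univ] at h1
    simp only [Nat.card_eq_fintype_card, Fintype.card_fin] at h1
    have : prank α = r := hrk
    rw [prank] at this
    omega
  show Set.ncard {α : Dgm n | α ∈ DM n r ∧ IsProj α} = 0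
  rw [this, Set.ncard_empty]

open Dgm in
lemma pM_rec (m r : ℕ) :
    pM (m + 1) r = (if r = 0 then 0 else pM m (r - 1)) + pM m r + pM m (r + 1) := by
  classical
  set AV := {α : Dgm (m + 1) | α ∈ TT (m + 1) r ∧ α.r (Sum.inl 0) (Sum.inr 0)} with hAV
  set AS := {α : Dgm (m + 1) | α ∈ TT (m + 1) r ∧ ∀ y, α.r (Sum.inl 0) y → y = Sum.inl 0}
    with hAS
  set AP := {α : Dgm (m + 1) | α ∈ TT (m + 1) r ∧ ∃ c : Fin m, α.r (Sum.inl 0) (Sum.inl c.succ)}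
    with hAP
  have hdecomp : TT (m + 1) r = AV ∪ (AS ∪ AP) := by
    ext α
    constructor
    · intro h
      rcases TT_cases h with h0 | h0 | h0
      · exact Or.inl ⟨h, h0⟩
      · exact Or.inr (Or.inl ⟨h, h0⟩)
      · exact Or.inr (Or.inr ⟨h, h0⟩)
    · rintro (⟨h, -⟩ | ⟨h, -⟩ | ⟨h, -⟩) <;> exact h
  have dVS : Disjoint AV AS := by
    rw [Set.disjoint_left]
    rintro α ⟨-, h0⟩ ⟨-, hsing⟩
    exact absurd (hsing _ h0) (by simp)
  have dVP : Disjoint AV AP := by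
    rw [Set.disjoint_left]
    rintro α ⟨hm', h0⟩ ⟨-, c, hc⟩
    obtain ⟨hPB, -⟩ := mem_TT.1 hm'
    rcases hPB _ _ _ h0 hc with h' | h' | h'
    · exact absurd h' (by simp)
    · exact absurd (Sum.inl.inj h') (by simpa [eq_comm] using Fin.succ_ne_zero c)
    · exact absurd h' (by simp)
  have dSP : Disjoint AS AP := by
    rw [Set.disjoint_left]
    rintro α ⟨-, hsing⟩ ⟨-, c, hc⟩
    exact absurd (Sum.inl.inj (hsing _ hc)) (Fin.succ_ne_zero c)
  have hcard : pM (m + 1) r = AV.ncard + (AS.ncard + AP.ncard) := by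
    rw [pM_eq_ncard, hdecomp,
      Set.ncard_union_eq (by exact Set.disjoint_union_right.2 ⟨dVS, dVP⟩)
        (Set.toFinite _) (Set.toFinite _),
      Set.ncard_union_eq dSP (Set.toFinite _) (Set.toFinite _)]
  have hS : AS.ncard = pM m r := by
    rw [hAS, partS_eq, Set.ncard_image_of_injective _ extS_injective, pM_eq_ncard]
  have hP : AP.ncard = pM m (r + 1) := by
    rw [hAP, partP_eq, Set.ncard_image_of_injOn extPm_injOn, pM_eq_ncard]
  have hV : AV.ncard = if r = 0 then 0 else pM m (r - 1) := by
    rcases r with _ | r'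
    · rw [if_pos rfl, hAV, partV_empty]
      exact Set.ncard_empty _
    · simp only [if_neg (Nat.succ_ne_zero r')]
      rw [hAV, partV_eq, Set.ncard_image_of_injective _ extV_injective]
      rfl
  rw [hcard, hS, hP, hV]
  omega


/-- The recurrence for the number `p(n,r)` of projections in
`D_r(M_n)`; terms with out-of-range indices are `0` (note `r - 1` is out of
range when `r = 0`, whence the `if`). -/
theorem pM_recurrence :
    pM 0 0 = 1 ∧
    (∀ n r : ℕ, n < r → pM n r = 0) ∧
    (∀ n r : ℕ, 1 ≤ n → r ≤ n →
      pM n r = (if r = 0 then 0 else pM (n - 1) (r - 1)) + pM (n - 1) r + pM (n - 1) (r + 1)) := by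
  refine ⟨pM_zero_zero, pM_high, ?_⟩
  intro n r hn _
  obtain ⟨m, rfl⟩ : ∃ m, n = m + 1 := ⟨n - 1, by omega⟩
  simpa using pM_rec m r
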